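/- arXiv:1812.06132 — 3 statements merged into one kernel-verified Lean document; each statement's English description precedes it below -/
import Mathlib

section
/- Let x : [0,1] → ℝ^n be continuously differentiable. Then for every N ∈ ℕ, N ≥ 1, and every t ∈ [0,1], the derivative of the Bernstein approximation satisfies ‖(B_N x)′(t) − x′(t)‖ ≤ (9n/4) · W_{x′}(N^{−1/2}), where W_{x′} is the modulus of continuity of the derivative x′. -/
open scoped BigOperators

/-- The Bernstein basis polynomial `b_{j,N}(t) = C(N,j) t^j (1-t)^(N-j)`. -/
noncomputable def bern (N j : ℕ) (t : ℝ) : ℝ :=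
  (N.choose j : ℝ) * t ^ j * (1 - t) ^ (N - j)

/-- The modulus of continuity on `[0,1]` of a function `g`. -/
noncomputable def modCont {E : Type*} [NormedAddCommGroup E] (g : ℝ → E) (δ : ℝ) : ℝ :=
  sSup {d : ℝ | ∃ s t : ℝ, s ∈ Set.Icc (0:ℝ) 1 ∧ t ∈ Set.Icc (0:ℝ) 1 ∧
    |s - t| ≤ δ ∧ d = ‖g s - g t‖}

/-- The `N`-th Bernstein approximation of `g : [0,1] → E`. -/
noncomputable def bapprox {E : Type*} [AddCommMonoid E] [Module ℝ E]
    (N : ℕ) (g : ℝ → E) (t : ℝ) : E :=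
  ∑ j : Fin (N + 1), bern N (j : ℕ) t • g (((j : ℕ) : ℝ) / (N : ℝ))

section BernAux

lemma bern_eq_eval (N j : ℕ) (t : ℝ) : bern N j t = (bernsteinPolynomial ℝ N j).eval t := by
  simp [bern, bernsteinPolynomial]

lemma bern_nonneg {N j : ℕ} {t : ℝ} (ht : t ∈ Set.Icc (0:ℝ) 1) : 0 ≤ bern N j t := by
  have h1 : (0:ℝ) ≤ t := ht.1
  have h2 : (0:ℝ) ≤ 1 - t := by linarith [ht.2]
  exact mul_nonneg (mul_nonneg (Nat.cast_nonneg _) (pow_nonneg h1 _)) (pow_nonneg h2 _)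

lemma bern_sum (M : ℕ) (t : ℝ) : ∑ j ∈ Finset.range (M+1), bern M j t = 1 := by
  have := congrArg (Polynomial.eval t) (bernsteinPolynomial.sum ℝ M)
  simpa [bern_eq_eval, Polynomial.eval_finset_sum] using this

lemma bern_sum_smul (M : ℕ) (t : ℝ) :
    ∑ j ∈ Finset.range (M+1), (j:ℝ) * bern M j t = M * t := by
  have := congrArg (Polynomial.eval t) (bernsteinPolynomial.sum_smul ℝ M)
  simpa [bern_eq_eval, Polynomial.eval_finset_sum, nsmul_eq_mul] using this

lemma bern_variance (M : ℕ) (t : ℝ) :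
    ∑ j ∈ Finset.range (M+1), ((M:ℝ) * t - j)^2 * bern M j t = M * t * (1 - t) := by
  have := congrArg (Polynomial.eval t) (bernsteinPolynomial.variance ℝ M)
  simpa [bern_eq_eval, Polynomial.eval_finset_sum, nsmul_eq_mul] using this

lemma bern_top (M : ℕ) (t : ℝ) : bern M (M+1) t = 0 := by
  simp [bern, Nat.choose_eq_zero_of_lt (Nat.lt_succ_self M)]

lemma bern_hasDerivAt (N j : ℕ) (t : ℝ) :
    HasDerivAt (fun s => bern N j s) ((Polynomial.derivative (bernsteinPolynomial ℝ N j)).eval t) t := by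
  have h := (bernsteinPolynomial ℝ N j).hasDerivAt t
  simpa [funext fun s => bern_eq_eval N j s] using h

lemma bern_moment2 (M : ℕ) (t : ℝ) :
    ∑ j ∈ Finset.range (M+1), (((j:ℝ) + 1/2)/(M+1) - t)^2 * bern M j t
      = ((M:ℝ) * t * (1-t) + (1/2 - t)^2) / (M+1)^2 := by
  have hM1 : ((M:ℝ)+1) ≠ 0 := by positivity
  have expand : ∀ j ∈ Finset.range (M+1),
      (((j:ℝ) + 1/2)/(M+1) - t)^2 * bern M j t
        = (((M:ℝ)*t - j)^2 * bern M j t + (2*(1/2-t)) * ((j:ℝ) * bern M j t)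
            + ((2*(t-1/2))*((M:ℝ)*t) + (1/2-t)^2) * bern M j t) / (M+1)^2 := by
    intro j _
    field_simp
    ring
  rw [Finset.sum_congr rfl expand, ← Finset.sum_div, Finset.sum_add_distrib,
    Finset.sum_add_distrib, ← Finset.mul_sum, ← Finset.mul_sum, bern_variance,
    bern_sum_smul, bern_sum]
  ring

lemma bern_moment2_le (M : ℕ) {t : ℝ} (ht : t ∈ Set.Icc (0:ℝ) 1) :
    ∑ j ∈ Finset.range (M+1), (((j:ℝ) + 1/2)/(M+1) - t)^2 * bern M j t
      ≤ 1 / (4*((M:ℝ)+1)) := by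
  rw [bern_moment2]
  rw [div_le_div_iff₀ (by positivity) (by positivity)]
  have h1 : (M:ℝ) * (t * (1-t)) ≤ M * (1/4) :=
    mul_le_mul_of_nonneg_left (by nlinarith [sq_nonneg (t - 1/2)]) (Nat.cast_nonneg M)
  nlinarith [ht.1, ht.2, sq_nonneg ((M:ℝ)+1), sq_nonneg (t - 1/2), Nat.cast_nonneg (α := ℝ) M, h1]

-- Cauchy-Schwarz step
lemma bern_abs_moment_le (M : ℕ) {t : ℝ} (ht : t ∈ Set.Icc (0:ℝ) 1) :
    ∑ j ∈ Finset.range (M+1), |(((j:ℝ) + 1/2)/(M+1) - t)| * bern M j t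
      ≤ Real.sqrt (1/(4*((M:ℝ)+1))) := by
  set d : ℕ → ℝ := fun j => ((j:ℝ) + 1/2)/(M+1) - t with hd
  have key : (∑ j ∈ Finset.range (M+1), |d j| * bern M j t)^2
      ≤ 1/(4*((M:ℝ)+1)) := by
    have cs := Finset.sum_mul_sq_le_sq_mul_sq (Finset.range (M+1))
      (fun j => Real.sqrt (bern M j t)) (fun j => Real.sqrt (bern M j t) * |d j|)
    have e1 : ∀ j ∈ Finset.range (M+1),
        Real.sqrt (bern M j t) * (Real.sqrt (bern M j t) * |d j|) = |d j| * bern M j t := by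
      intro j _
      rw [← mul_assoc, Real.mul_self_sqrt (bern_nonneg ht)]; ring
    have e2 : ∀ j ∈ Finset.range (M+1),
        Real.sqrt (bern M j t) ^ 2 = bern M j t := fun j _ => Real.sq_sqrt (bern_nonneg ht)
    have e3 : ∀ j ∈ Finset.range (M+1),
        (Real.sqrt (bern M j t) * |d j|) ^ 2 = (d j)^2 * bern M j t := by
      intro j _
      rw [mul_pow, Real.sq_sqrt (bern_nonneg ht), sq_abs]; ring
    rw [Finset.sum_congr rfl e1, Finset.sum_congr rfl e2, Finset.sum_congr rfl e3,
      bern_sum, one_mul] at cs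
    exact cs.trans (bern_moment2_le M ht)
  have hnn : 0 ≤ ∑ j ∈ Finset.range (M+1), |d j| * bern M j t :=
    Finset.sum_nonneg fun j _ => mul_nonneg (abs_nonneg _) (bern_nonneg ht)
  calc ∑ j ∈ Finset.range (M+1), |d j| * bern M j t
      = Real.sqrt ((∑ j ∈ Finset.range (M+1), |d j| * bern M j t)^2) := by
        rw [Real.sqrt_sq hnn]
    _ ≤ Real.sqrt (1/(4*((M:ℝ)+1))) := Real.sqrt_le_sqrt key

variable {E : Type*} [NormedAddCommGroup E] {g : ℝ → E} {δ c : ℝ}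

def mcSet (g : ℝ → E) (δ : ℝ) : Set ℝ :=
  {d : ℝ | ∃ s t : ℝ, s ∈ Set.Icc (0:ℝ) 1 ∧ t ∈ Set.Icc (0:ℝ) 1 ∧
    |s - t| ≤ δ ∧ d = ‖g s - g t‖}

lemma modCont_eq : modCont g δ = sSup (mcSet g δ) := rfl

lemma mcSet_bddAbove (hg : ContinuousOn g (Set.Icc (0:ℝ) 1)) :
    BddAbove (mcSet g δ) := by
  obtain ⟨C, hC⟩ := isCompact_Icc.exists_bound_of_continuousOn hg
  refine ⟨2*C, ?_⟩
  rintro d ⟨s, u, hs, hu, -, rfl⟩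
  calc ‖g s - g u‖ ≤ ‖g s‖ + ‖g u‖ := norm_sub_le _ _
    _ ≤ 2*C := by linarith [hC s hs, hC u hu]

lemma le_modCont (hb : BddAbove (mcSet g δ)) {s u : ℝ}
    (hs : s ∈ Set.Icc (0:ℝ) 1) (hu : u ∈ Set.Icc (0:ℝ) 1) (h : |s - u| ≤ δ) :
    ‖g s - g u‖ ≤ modCont g δ :=
  le_csSup hb ⟨s, u, hs, hu, h, rfl⟩

lemma modCont_nonneg (hb : BddAbove (mcSet g δ)) (hδ : 0 ≤ δ) :
    0 ≤ modCont g δ := by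
  have h := le_modCont hb (by norm_num : (0:ℝ) ∈ Set.Icc (0:ℝ) 1)
    (by norm_num : (0:ℝ) ∈ Set.Icc (0:ℝ) 1) (by simpa using hδ)
  simpa using h

lemma norm_sub_le_chain (hb : BddAbove (mcSet g δ)) (hδ : 0 < δ) (hc : 0 < c)
    {s u : ℝ} (hs : s ∈ Set.Icc (0:ℝ) 1) (hu : u ∈ Set.Icc (0:ℝ) 1)
    (h : |u - s| ≤ c) : ‖g u - g s‖ ≤ (1 + c/δ) * modCont g δ := by
  set k := ⌈c/δ⌉₊ with hk
  have hk0 : 0 < k := Nat.ceil_pos.2 (by positivity)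
  have hk0' : (0:ℝ) < k := by exact_mod_cast hk0
  set p : ℕ → ℝ := fun i => s + (i:ℝ)/k * (u - s) with hp
  have hmem : ∀ i ≤ k, p i ∈ Set.Icc (0:ℝ) 1 := by
    intro i hi
    have h0 : 0 ≤ (i:ℝ)/k := by positivity
    have h1 : (i:ℝ)/k ≤ 1 := by
      rw [div_le_one hk0']; exact_mod_cast hi
    constructor
    · simp only [hp]; nlinarith [hs.1, hu.1]
    · simp only [hp]; nlinarith [hs.2, hu.2]
  have hpk : p k = u := by
    simp only [hp]; field_simp; ring
  have hp0 : p 0 = s := by simp [hp]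
  have tele : g u - g s = ∑ i ∈ Finset.range k, (g (p (i+1)) - g (p i)) := by
    rw [Finset.sum_range_sub (fun i => g (p i)), hpk, hp0]
  have hstep : ∀ i : ℕ, i < k → |p (i+1) - p i| ≤ δ := by
    intro i hi
    have e : p (i+1) - p i = (u - s)/k := by
      simp only [hp]; push_cast; field_simp; ring
    rw [e, abs_div, abs_of_pos hk0']
    rw [div_le_iff₀ hk0']
    calc |u - s| ≤ c := h
      _ ≤ δ * k := by
        calc c = δ * (c/δ) := by field_simp
          _ ≤ δ * k := by
            refine mul_le_mul_of_nonneg_left ?_ hδ.le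
            exact Nat.le_ceil _
  have W0 : 0 ≤ modCont g δ := modCont_nonneg hb hδ.le
  calc ‖g u - g s‖ = ‖∑ i ∈ Finset.range k, (g (p (i+1)) - g (p i))‖ := by rw [← tele]
    _ ≤ ∑ i ∈ Finset.range k, ‖g (p (i+1)) - g (p i)‖ := norm_sum_le _ _
    _ ≤ ∑ i ∈ Finset.range k, modCont g δ := by
        refine Finset.sum_le_sum fun i hi => ?_
        have hik : i < k := Finset.mem_range.1 hi
        exact le_modCont hb (hmem _ hik) (hmem _ hik.le)
          (hstep i hik)
    _ = (k:ℝ) * modCont g δ := by rw [Finset.sum_const, Finset.card_range, nsmul_eq_mul]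
    _ ≤ (1 + c/δ) * modCont g δ := by
        refine mul_le_mul_of_nonneg_right ?_ W0
        have := (Nat.ceil_lt_add_one (by positivity : (0:ℝ) ≤ c/δ)).le
        rw [hk]; push_cast; linarith

lemma bapprox_hasDerivAt {E : Type*} [NormedAddCommGroup E] [NormedSpace ℝ E]
    (N : ℕ) (g : ℝ → E) (t : ℝ) :
    HasDerivAt (bapprox N g)
      (∑ j : Fin (N+1), ((Polynomial.derivative (bernsteinPolynomial ℝ N (j:ℕ))).eval t)
        • g (((j:ℕ):ℝ)/(N:ℝ))) t := by
  have : HasDerivAt (fun s => ∑ j : Fin (N+1), bern N (j:ℕ) s • g (((j:ℕ):ℝ)/(N:ℝ)))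
      (∑ j : Fin (N+1), ((Polynomial.derivative (bernsteinPolynomial ℝ N (j:ℕ))).eval t)
        • g (((j:ℕ):ℝ)/(N:ℝ))) t :=
    HasDerivAt.fun_sum fun j _ => (bern_hasDerivAt N (j:ℕ) t).smul_const _
  exact this

lemma deriv_sum_ident {E : Type*} [AddCommGroup E] [Module ℝ E] (M : ℕ) (t : ℝ) (v : ℕ → E) :
    (∑ j : Fin (M+2), ((Polynomial.derivative (bernsteinPolynomial ℝ (M+1) (j:ℕ))).eval t) • v (j:ℕ))
      = ∑ j ∈ Finset.range (M+1), (((M:ℝ)+1) * bern M j t) • (v (j+1) - v j) := by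
  have h0 : ((Polynomial.derivative (bernsteinPolynomial ℝ (M+1) 0)).eval t)
      = -(((M:ℝ)+1) * bern M 0 t) := by
    rw [bernsteinPolynomial.derivative_zero]
    simp only [Polynomial.eval_mul, Polynomial.eval_neg, Polynomial.eval_natCast, bern_eq_eval]
    push_cast
    ring
  have hsucc : ∀ j : ℕ, ((Polynomial.derivative (bernsteinPolynomial ℝ (M+1) (j+1))).eval t)
      = ((M:ℝ)+1) * (bern M j t - bern M (j+1) t) := by
    intro j
    rw [bernsteinPolynomial.derivative_succ]
    simp only [Polynomial.eval_mul, Polynomial.eval_sub, Polynomial.eval_natCast, bern_eq_eval]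
    push_cast
    ring
  rw [Fin.sum_univ_eq_sum_range
    (fun j => ((Polynomial.derivative (bernsteinPolynomial ℝ (M+1) j)).eval t) • v j) (M+2)]
  rw [Finset.sum_range_succ' _ (M+1)]
  simp only [hsucc, h0]
  have lhs1 : ∑ j ∈ Finset.range (M+1), (((M:ℝ)+1) * (bern M j t - bern M (j+1) t)) • v (j+1)
      = (∑ j ∈ Finset.range (M+1), (((M:ℝ)+1) * bern M j t) • v (j+1))
        - ∑ j ∈ Finset.range (M+1), (((M:ℝ)+1) * bern M (j+1) t) • v (j+1) := by
    rw [← Finset.sum_sub_distrib]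
    refine Finset.sum_congr rfl fun j _ => ?_
    rw [← sub_smul]; ring_nf
  have rhs1 : ∑ j ∈ Finset.range (M+1), (((M:ℝ)+1) * bern M j t) • (v (j+1) - v j)
      = (∑ j ∈ Finset.range (M+1), (((M:ℝ)+1) * bern M j t) • v (j+1))
        - ∑ j ∈ Finset.range (M+1), (((M:ℝ)+1) * bern M j t) • v j := by
    rw [← Finset.sum_sub_distrib]
    exact Finset.sum_congr rfl fun j _ => smul_sub _ _ _
  have shift : ∑ j ∈ Finset.range (M+1), (((M:ℝ)+1) * bern M j t) • v j
      = (∑ j ∈ Finset.range M, (((M:ℝ)+1) * bern M (j+1) t) • v (j+1))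
        + (((M:ℝ)+1) * bern M 0 t) • v 0 :=
    Finset.sum_range_succ' _ M
  have shift2 : ∑ j ∈ Finset.range (M+1), (((M:ℝ)+1) * bern M (j+1) t) • v (j+1)
      = ∑ j ∈ Finset.range M, (((M:ℝ)+1) * bern M (j+1) t) • v (j+1) := by
    rw [Finset.sum_range_succ, bern_top]
    simp
  rw [lhs1, rhs1, shift, shift2]
  rw [neg_smul]
  abel

lemma ftc {E : Type*} [NormedAddCommGroup E] [NormedSpace ℝ E] [CompleteSpace E]
    {x x' : ℝ → E} (hx : ∀ t ∈ Set.Icc (0:ℝ) 1, HasDerivWithinAt x (x' t) (Set.Icc (0:ℝ) 1) t)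
    (hx' : ContinuousOn x' (Set.Icc (0:ℝ) 1)) {a b : ℝ} (h0 : 0 ≤ a) (hab : a ≤ b) (h1 : b ≤ 1) :
    ∫ s in a..b, x' s = x b - x a := by
  have hsub : Set.Icc a b ⊆ Set.Icc (0:ℝ) 1 := Set.Icc_subset_Icc h0 h1
  apply intervalIntegral.integral_eq_sub_of_hasDeriv_right_of_le hab
  · exact fun s hs => ((hx s (hsub hs)).continuousWithinAt).mono hsub
  · intro s hs
    have hs01 : s ∈ Set.Ioo (0:ℝ) 1 := ⟨lt_of_le_of_lt h0 hs.1, lt_of_lt_of_le hs.2 h1⟩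
    exact ((hx s (Set.mem_Icc_of_Ioo hs01)).hasDerivAt
      (Icc_mem_nhds hs01.1 hs01.2)).hasDerivWithinAt
  · exact (hx'.mono (fun s hs => hsub (by rwa [Set.uIcc_of_le hab] at hs))).intervalIntegrable


end BernAux

set_option maxHeartbeats 2000000 in
/-- rate of convergence of the derivative of the Bernstein approximation
of a continuously differentiable function `x : [0,1] → ℝ^n` with derivative `x'`. -/
theorem bernstein_approx_deriv_uniform_bound (n : ℕ)
    (x x' : ℝ → EuclideanSpace ℝ (Fin n))
    (hx : ∀ t ∈ Set.Icc (0:ℝ) 1, HasDerivWithinAt x (x' t) (Set.Icc (0:ℝ) 1) t)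
    (hx' : ContinuousOn x' (Set.Icc (0:ℝ) 1))
    (N : ℕ) (hN : 1 ≤ N) (t : ℝ) (ht : t ∈ Set.Icc (0:ℝ) 1) :
    ‖deriv (bapprox N x) t - x' t‖
      ≤ (9 * (n : ℝ) / 4) * modCont x' ((N : ℝ) ^ (-(1/2 : ℝ))) := by
  obtain ⟨M, rfl⟩ : ∃ M, N = M + 1 := ⟨N - 1, (Nat.succ_pred_eq_of_pos hN).symm⟩
  -- basic numeric facts
  have hM1 : (0:ℝ) < (M:ℝ) + 1 := by positivity
  set s : ℝ := Real.sqrt ((M:ℝ)+1) with hs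
  have hs2 : s^2 = (M:ℝ)+1 := Real.sq_sqrt hM1.le
  have hs1 : 1 ≤ s := by
    nlinarith [hs2, Real.sqrt_nonneg ((M:ℝ)+1), Nat.cast_nonneg (α := ℝ) M]
  have hspos : (0:ℝ) < s := by linarith
  have hδeq : ((M+1:ℕ):ℝ) ^ (-(1/2:ℝ)) = s⁻¹ := by
    push_cast
    rw [Real.rpow_neg (by positivity), ← Real.sqrt_eq_rpow]
  set δ : ℝ := ((M+1:ℕ):ℝ) ^ (-(1/2:ℝ)) with hδdef
  have hδ : δ = s⁻¹ := hδeq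
  have hδpos : 0 < δ := by rw [hδ]; positivity
  have hb : BddAbove (mcSet x' δ) := mcSet_bddAbove hx'
  set W : ℝ := modCont x' δ with hW
  have W0 : 0 ≤ W := modCont_nonneg hb hδpos.le
  -- trivial case n = 0
  rcases Nat.eq_zero_or_pos n with hn | hn
  · subst hn
    have h1 : deriv (bapprox (M+1) x) t - x' t = 0 := Subsingleton.elim _ _
    rw [h1, norm_zero]
    simp
  -- the derivative formula
  set v : ℕ → EuclideanSpace ℝ (Fin n) := fun k => x (((k:ℕ):ℝ) / ((M+1:ℕ):ℝ)) with hv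
  have hD : deriv (bapprox (M+1) x) t
      = ∑ j ∈ Finset.range (M+1), (((M:ℝ)+1) * bern M j t) • (v (j+1) - v j) := by
    rw [(bapprox_hasDerivAt (M+1) x t).deriv]
    exact deriv_sum_ident M t v
  -- the per-piece bound
  set m : ℕ → ℝ := fun j => ((j:ℝ) + 1/2)/((M:ℝ)+1) with hm
  set c : ℕ → ℝ := fun j => |m j - t| + 1/(2*((M:ℝ)+1)) with hc
  have hcpos : ∀ j, 0 < c j := fun j => by
    have : 0 < 1/(2*((M:ℝ)+1)) := by positivity
    have h2 : 0 ≤ |m j - t| := abs_nonneg _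
    simp only [hc]; linarith
  have hpiece : ∀ j ∈ Finset.range (M+1),
      ‖((M:ℝ)+1) • (v (j+1) - v j) - x' t‖ ≤ (1 + c j/δ) * W := by
    intro j hj
    have hjM : j ≤ M := Nat.lt_succ_iff.1 (Finset.mem_range.1 hj)
    have hjM' : (j:ℝ) ≤ M := by exact_mod_cast hjM
    set a : ℝ := ((j:ℕ):ℝ) / ((M+1:ℕ):ℝ) with ha
    set b : ℝ := (((j+1:ℕ)):ℝ) / ((M+1:ℕ):ℝ) with hbdef
    have hacast : a = (j:ℝ)/((M:ℝ)+1) := by rw [ha]; push_cast; ring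
    have hbcast : b = ((j:ℝ)+1)/((M:ℝ)+1) := by rw [hbdef]; push_cast; ring
    have h0a : 0 ≤ a := by rw [hacast]; positivity
    have hab : a ≤ b := by
      rw [hacast, hbcast, div_le_div_iff₀ hM1 hM1]
      nlinarith
    have hb1 : b ≤ 1 := by
      rw [hbcast, div_le_one hM1]; linarith
    have hint : ∫ u in a..b, x' u = x b - x a := ftc hx hx' h0a hab hb1
    have hvj : v j = x a ∧ v (j+1) = x b := ⟨rfl, rfl⟩
    have hx'int : IntervalIntegrable x' MeasureTheory.volume a b := by
      apply ContinuousOn.intervalIntegrable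
      apply hx'.mono
      intro u hu
      rw [Set.uIcc_of_le hab] at hu
      exact ⟨le_trans h0a hu.1, le_trans hu.2 hb1⟩
    have hsplit : ∫ u in a..b, (x' u - x' t) = (x b - x a) - (b - a) • x' t := by
      rw [intervalIntegral.integral_sub hx'int intervalIntegrable_const,
        intervalIntegral.integral_const, hint]
    have hba : b - a = 1/((M:ℝ)+1) := by rw [hacast, hbcast]; field_simp; ring
    have hnormint : ‖∫ u in a..b, (x' u - x' t)‖ ≤ ((1 + c j/δ) * W) * (1/((M:ℝ)+1)) := by
      have key : ∀ u ∈ Set.uIoc a b, ‖x' u - x' t‖ ≤ (1 + c j/δ) * W := by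
        intro u hu
        rw [Set.uIoc_of_le hab] at hu
        have hu01 : u ∈ Set.Icc (0:ℝ) 1 := ⟨le_trans h0a hu.1.le, le_trans hu.2 hb1⟩
        apply norm_sub_le_chain hb hδpos (hcpos j) ht hu01
        have hma : m j - 1/(2*((M:ℝ)+1)) = (j:ℝ)/((M:ℝ)+1) := by
          simp only [hm]; field_simp; ring
        have hmb : m j + 1/(2*((M:ℝ)+1)) = ((j:ℝ)+1)/((M:ℝ)+1) := by
          simp only [hm]; field_simp; ring
        have hua := hu.1.le; rw [hacast] at hua
        have hub := hu.2; rw [hbcast] at hub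
        have h1 : |u - m j| ≤ 1/(2*((M:ℝ)+1)) := by
          rw [abs_le]; constructor <;> linarith
        have h2 : |m j - t| ≤ |m j - t| := le_rfl
        calc |u - t| ≤ |u - m j| + |m j - t| := abs_sub_le u (m j) t
          _ ≤ c j := by simp only [hc]; linarith
      have := intervalIntegral.norm_integral_le_of_norm_le_const key
      rwa [abs_of_nonneg (by linarith : (0:ℝ) ≤ b - a), hba] at this
    have heq : ((M:ℝ)+1) • (v (j+1) - v j) - x' t
        = ((M:ℝ)+1) • (∫ u in a..b, (x' u - x' t)) := by
      have hx'eq : ((M:ℝ)+1) • ((1/((M:ℝ)+1)) • x' t) = x' t := by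
        rw [smul_smul, mul_one_div, div_self (ne_of_gt hM1), one_smul]
      rw [hsplit, hba, hvj.1, hvj.2,
        smul_sub ((M:ℝ)+1) (x b - x a) ((1/((M:ℝ)+1)) • x' t), hx'eq]
    rw [heq, norm_smul, Real.norm_eq_abs, abs_of_pos hM1]
    calc ((M:ℝ)+1) * ‖∫ u in a..b, (x' u - x' t)‖
        ≤ ((M:ℝ)+1) * (((1 + c j/δ) * W) * (1/((M:ℝ)+1))) :=
          mul_le_mul_of_nonneg_left hnormint hM1.le
      _ = (1 + c j/δ) * W := by field_simp
  -- assemble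
  have hEsum : deriv (bapprox (M+1) x) t - x' t
      = ∑ j ∈ Finset.range (M+1), bern M j t • ((((M:ℝ)+1) • (v (j+1) - v j)) - x' t) := by
    rw [hD]
    rw [Finset.sum_congr rfl (fun j _ => smul_sub (bern M j t) (((M:ℝ)+1) • (v (j+1) - v j)) (x' t))]
    rw [Finset.sum_sub_distrib, ← Finset.sum_smul, bern_sum, one_smul]
    congr 1
    exact Finset.sum_congr rfl fun j _ => by rw [smul_smul, mul_comm]
  have hnorm : ‖deriv (bapprox (M+1) x) t - x' t‖
      ≤ ∑ j ∈ Finset.range (M+1), bern M j t * ((1 + c j/δ) * W) := by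
    rw [hEsum]
    refine (norm_sum_le _ _).trans (Finset.sum_le_sum fun j hj => ?_)
    rw [norm_smul, Real.norm_eq_abs, abs_of_nonneg (bern_nonneg ht)]
    exact mul_le_mul_of_nonneg_left (hpiece j hj) (bern_nonneg ht)
  have hsum2 : ∑ j ∈ Finset.range (M+1), bern M j t * ((1 + c j/δ) * W) ≤ 2 * W := by
    have expand : ∀ j ∈ Finset.range (M+1), bern M j t * ((1 + c j/δ) * W)
        = (bern M j t + (|m j - t| * bern M j t) * s + (1/(2*((M:ℝ)+1)) * bern M j t) * s) * W := by
      intro j _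
      rw [hδ]
      simp only [hc]
      field_simp
      ring
    rw [Finset.sum_congr rfl expand, ← Finset.sum_mul]
    have e2 : ∑ j ∈ Finset.range (M+1),
        (bern M j t + (|m j - t| * bern M j t) * s + (1/(2*((M:ℝ)+1)) * bern M j t) * s)
        = 1 + (∑ j ∈ Finset.range (M+1), |m j - t| * bern M j t) * s
          + (1/(2*((M:ℝ)+1))) * s := by
      simp only [Finset.sum_add_distrib, ← Finset.sum_mul, ← Finset.mul_sum, bern_sum]
      ring
    rw [e2]
    have habs : (∑ j ∈ Finset.range (M+1), |m j - t| * bern M j t) ≤ 1/(2*s) := by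
      have h := bern_abs_moment_le M ht
      have : Real.sqrt (1/(4*((M:ℝ)+1))) = 1/(2*s) := by
        rw [show (1/(4*((M:ℝ)+1))) = (1/(2*s))^2 by rw [div_pow, mul_pow, hs2]; norm_num]
        exact Real.sqrt_sq (by positivity)
      rw [this] at h
      simpa only [hm] using h
    have hs3 : (1/(2*((M:ℝ)+1))) * s = 1/(2*s) := by
      rw [← hs2]; field_simp
    have hfinal : 1 + (∑ j ∈ Finset.range (M+1), |m j - t| * bern M j t) * s
        + (1/(2*((M:ℝ)+1))) * s ≤ 2 := by
      rw [hs3]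
      have h1 : (∑ j ∈ Finset.range (M+1), |m j - t| * bern M j t) * s ≤ (1/(2*s)) * s :=
        mul_le_mul_of_nonneg_right habs hspos.le
      have h2 : (1/(2*s)) * s = 1/2 := by field_simp
      have h3 : 1/(2*s) ≤ 1/2 := by
        rw [div_le_div_iff₀ (by positivity) (by norm_num)]; linarith
      linarith
    exact mul_le_mul_of_nonneg_right hfinal W0
  have hn1 : (1:ℝ) ≤ (n:ℝ) := by exact_mod_cast hn
  calc ‖deriv (bapprox (M+1) x) t - x' t‖ ≤ 2 * W := le_trans hnorm hsum2
    _ ≤ (9 * (n:ℝ)/4) * W := by nlinarith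
end

section
/- Limit of relaxed dynamics at dense nodes (Step 1 of Theorem 2): let f : ℝ^{n_x} × ℝ^{n_u} → ℝ^{n_x} be continuous. For each N ∈ ℕ, N ≥ 1, let x_N : [0,1] → ℝ^{n_x} be differentiable and u_N : [0,1] → ℝ^{n_u} be continuous, and suppose x_N → x^∞, x_N′ → v^∞ and u_N → u^∞ uniformly on [0,1], where x^∞ is differentiable with derivative v^∞ and v^∞, u^∞ are continuous. If there are δ_N ≥ 0 with δ_N → 0 such that ‖x_N′(j/N) − f(x_N(j/N), u_N(j/N))‖ ≤ δ_N for all 0 ≤ j ≤ N and all N, then (x^∞)′(t) = f(x^∞(t), u^∞(t)) for all t ∈ [0,1]. -/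
open scoped BigOperators

/-- Step 1 of Theorem 2: if a uniformly convergent sequence of
differentiable functions satisfies the relaxed dynamics at the dense equidistant
nodes with relaxation bounds `δ_N → 0`, then the limit satisfies the exact
dynamics on all of `[0,1]`. -/
theorem limit_of_relaxed_dynamics (nx nu : ℕ)
    (f : EuclideanSpace ℝ (Fin nx) × EuclideanSpace ℝ (Fin nu) → EuclideanSpace ℝ (Fin nx))
    (hf : Continuous f)
    (xN xN' : ℕ → ℝ → EuclideanSpace ℝ (Fin nx))
    (uN : ℕ → ℝ → EuclideanSpace ℝ (Fin nu))
    (xinf vinf : ℝ → EuclideanSpace ℝ (Fin nx)) (uinf : ℝ → EuclideanSpace ℝ (Fin nu))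
    (hxNd : ∀ N, 1 ≤ N → ∀ t ∈ Set.Icc (0:ℝ) 1,
      HasDerivWithinAt (xN N) (xN' N t) (Set.Icc (0:ℝ) 1) t)
    (huNc : ∀ N, 1 ≤ N → ContinuousOn (uN N) (Set.Icc (0:ℝ) 1))
    (hux : TendstoUniformlyOn xN xinf Filter.atTop (Set.Icc (0:ℝ) 1))
    (hux' : TendstoUniformlyOn xN' vinf Filter.atTop (Set.Icc (0:ℝ) 1))
    (huu : TendstoUniformlyOn uN uinf Filter.atTop (Set.Icc (0:ℝ) 1))
    (hxinfd : ∀ t ∈ Set.Icc (0:ℝ) 1, HasDerivWithinAt xinf (vinf t) (Set.Icc (0:ℝ) 1) t)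
    (hvinf : ContinuousOn vinf (Set.Icc (0:ℝ) 1))
    (huinf : ContinuousOn uinf (Set.Icc (0:ℝ) 1))
    (δ : ℕ → ℝ) (hδ0 : ∀ N, 0 ≤ δ N) (hδ : Filter.Tendsto δ Filter.atTop (nhds 0))
    (hnodes : ∀ N, 1 ≤ N → ∀ j : ℕ, j ≤ N →
      ‖xN' N ((j : ℝ) / (N : ℝ))
          - f (xN N ((j : ℝ) / (N : ℝ)), uN N ((j : ℝ) / (N : ℝ)))‖ ≤ δ N) :
    ∀ t ∈ Set.Icc (0:ℝ) 1, vinf t = f (xinf t, uinf t) := by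
  intro t ht
  obtain ⟨ht0, ht1⟩ := ht
  set s : ℕ → ℝ := fun N => (⌊(N:ℝ) * t⌋₊ : ℝ) / N with hs
  have hjle : ∀ N : ℕ, 1 ≤ N → ⌊(N:ℝ) * t⌋₊ ≤ N := by
    intro N hN
    have : (N:ℝ) * t ≤ (N:ℝ) := by nlinarith [(Nat.one_le_cast.mpr hN : (1:ℝ) ≤ N)]
    have := Nat.floor_le_of_le this
    simpa using this
  have hmem : ∀ N : ℕ, 1 ≤ N → s N ∈ Set.Icc (0:ℝ) 1 := by
    intro N hN
    have hNpos : (0:ℝ) < N := by exact_mod_cast hN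
    constructor
    · positivity
    · rw [div_le_one hNpos]
      exact_mod_cast hjle N hN
  have hsle : ∀ N : ℕ, 1 ≤ N → s N ≤ t := by
    intro N hN
    have hNpos : (0:ℝ) < N := by exact_mod_cast hN
    rw [hs, div_le_iff₀ hNpos]
    calc (⌊(N:ℝ)*t⌋₊ : ℝ) ≤ (N:ℝ)*t := Nat.floor_le (by positivity)
      _ = t * N := by ring
  have hslb : ∀ N : ℕ, 1 ≤ N → t - 1/(N:ℝ) ≤ s N := by
    intro N hN
    have hNpos : (0:ℝ) < N := by exact_mod_cast hN
    rw [hs, sub_le_iff_le_add, ← add_div, le_div_iff₀ hNpos]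
    have := Nat.sub_one_lt_floor ((N:ℝ)*t)
    nlinarith
  have hst : Filter.Tendsto s Filter.atTop (nhds t) := by
    have hlow : Filter.Tendsto (fun N : ℕ => t - 1/(N:ℝ)) Filter.atTop (nhds t) := by
      have := Filter.Tendsto.const_sub t tendsto_one_div_atTop_nhds_zero_nat
      simpa using this
    refine tendsto_of_tendsto_of_tendsto_of_le_of_le' hlow tendsto_const_nhds ?_ ?_
    · filter_upwards [Filter.eventually_ge_atTop 1] with N hN using hslb N hN
    · filter_upwards [Filter.eventually_ge_atTop 1] with N hN using hsle N hN
  have hst' : Filter.Tendsto s Filter.atTop (nhdsWithin t (Set.Icc (0:ℝ) 1)) := by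
    refine tendsto_nhdsWithin_of_tendsto_nhds_of_eventually_within _ hst ?_
    filter_upwards [Filter.eventually_ge_atTop 1] with N hN using hmem N hN
  have htmem : t ∈ Set.Icc (0:ℝ) 1 := ⟨ht0, ht1⟩
  have ha : Filter.Tendsto (fun N => xN' N (s N)) Filter.atTop (nhds (vinf t)) :=
    hux'.tendsto_comp (hvinf.continuousWithinAt htmem) hst'
  have hb : Filter.Tendsto (fun N => xN N (s N)) Filter.atTop (nhds (xinf t)) :=
    hux.tendsto_comp (hxinfd t htmem).continuousWithinAt hst'
  have hc : Filter.Tendsto (fun N => uN N (s N)) Filter.atTop (nhds (uinf t)) :=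
    huu.tendsto_comp (huinf.continuousWithinAt htmem) hst'
  have hfbc : Filter.Tendsto (fun N => f (xN N (s N), uN N (s N))) Filter.atTop
      (nhds (f (xinf t, uinf t))) :=
    (hf.tendsto _).comp (hb.prodMk_nhds hc)
  have hdiff : Filter.Tendsto (fun N => xN' N (s N) - f (xN N (s N), uN N (s N)))
      Filter.atTop (nhds 0) := by
    refine squeeze_zero_norm' ?_ hδ
    filter_upwards [Filter.eventually_ge_atTop 1] with N hN
    exact hnodes N hN _ (hjle N hN)
  have ha' : Filter.Tendsto (fun N => xN' N (s N)) Filter.atTop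
      (nhds (f (xinf t, uinf t))) := by
    have := hdiff.add hfbc
    simpa using this
  exact tendsto_nhds_unique ha ha'
end

section
/- Consistency of the Bernstein discretization (Theorem 2): let E : ℝ^{n_x} × ℝ^{n_x} → ℝ, F : ℝ^{n_x} × ℝ^{n_u} → ℝ, f : ℝ^{n_x} × ℝ^{n_u} → ℝ^{n_x}, e : ℝ^{n_x} × ℝ^{n_x} → ℝ^{n_e}, h : ℝ^{n_x} × ℝ^{n_u} → ℝ^{n_h} all be Lipschitz continuous. Suppose Problem P (minimize E(x(0),x(1)) + ∫_0^1 F(x(t),u(t)) dt over continuously differentiable x and continuous u subject to x′ = f(x,u), e(x(0),x(1)) = 0 and h(x(t),u(t)) ≤ 0 on [0,1]) admits an optimal solution (x*, u*) with x* ∈ C¹ and u* ∈ C⁰. Let δ_P^N = C_P max{W_{(x*)′}(N^{−1/2}), W_{x*}(N^{−1/2}), W_{u*}(N^{−1/2})} with C_P as in the feasibility theorem, and for each N ≥ N_1 let (x̄*_N, ū*_N) be coefficient matrices minimizing the discrete cost E(x_N(0), x_N(1)) + (1/(N+1)) Σ_{j=0}^N F(x_N(j/N), u_N(j/N)) over all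 coefficients whose Bernstein polynomials x_N, u_N satisfy ‖x_N′(j/N) − f(x_N(j/N),u_N(j/N))‖ ≤ δ_P^N, e(x_N(0),x_N(1)) = 0 and h(x_N(j/N),u_N(j/N)) ≤ δ_P^N·1 at all nodes j = 0,…,N. If the resulting optimal Bernstein polynomials (x*_N, u*_N) converge uniformly on [0,1] (together with the derivatives (x*_N)′) to a pair (x^∞, u^∞) with (x^∞)′ and u^∞ continuous, then (x^∞, u^∞) is feasible for Problem P and E(x^∞(0),x^∞(1)) + ∫_0^1 F(x^∞,u^∞) dt = E(x*(0),x*(1)) + ∫_0^1 F(x*,u*) dt, i.e. (x^∞, u^∞) is an optimal solution of Problem P. -/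
open scoped BigOperators unitInterval
open Filter

/-- The Bernstein polynomial with coefficient matrix `c`. -/
noncomputable def bpoly {E : Type*} [AddCommMonoid E] [Module ℝ E]
    (N : ℕ) (c : Fin (N + 1) → E) (t : ℝ) : E :=
  ∑ j : Fin (N + 1), bern N (j : ℕ) t • c j

lemma tendsto_modCont {E : Type*} [NormedAddCommGroup E] (g : ℝ → E)
    (hg : ContinuousOn g (Set.Icc (0:ℝ) 1)) {r : ℕ → ℝ} (hr0 : ∀ n, 0 ≤ r n)
    (hr : Filter.Tendsto r atTop (nhds 0)) :
    Filter.Tendsto (fun n => modCont g (r n)) atTop (nhds 0) := by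
  have huc : UniformContinuousOn g (Set.Icc (0:ℝ) 1) :=
    isCompact_Icc.uniformContinuousOn_of_continuous hg
  rw [Metric.uniformContinuousOn_iff] at huc
  rw [Metric.tendsto_atTop] at hr ⊢
  intro ε hε
  obtain ⟨η, hη, hgη⟩ := huc (ε/2) (by linarith)
  obtain ⟨N0, hN0⟩ := hr η hη
  refine ⟨N0, fun n hn => ?_⟩
  have hrn : r n < η := by
    have := hN0 n hn
    rw [Real.dist_eq, sub_zero, abs_of_nonneg (hr0 n)] at this
    exact this
  have hub : ∀ d ∈ {d : ℝ | ∃ s t : ℝ, s ∈ Set.Icc (0:ℝ) 1 ∧ t ∈ Set.Icc (0:ℝ) 1 ∧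
      |s - t| ≤ r n ∧ d = ‖g s - g t‖}, d ≤ ε/2 := by
    rintro d ⟨s, t, hs, ht, hst, rfl⟩
    have : dist s t < η := lt_of_le_of_lt (by rwa [Real.dist_eq]) hrn
    have := hgη s hs t ht this
    rw [dist_eq_norm] at this
    linarith
  have h1 : modCont g (r n) ≤ ε/2 := Real.sSup_le hub (by linarith)
  have h0 : 0 ≤ modCont g (r n) := by
    apply le_csSup ⟨ε/2, fun d hd => hub d hd⟩
    exact ⟨0, 0, by norm_num, by norm_num, by simpa using hr0 n, by simp⟩
  rw [Real.dist_eq, sub_zero, abs_of_nonneg h0]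
  linarith

lemma le_of_nodewise (G : ℝ → ℝ) (hG : ContinuousOn G (Set.Icc (0:ℝ) 1))
    (H : ∀ ε > (0:ℝ), ∀ᶠ N : ℕ in atTop, ∀ j : ℕ, j ≤ N → G ((j:ℝ)/(N:ℝ)) ≤ ε) :
    ∀ t ∈ Set.Icc (0:ℝ) 1, G t ≤ 0 := by
  intro t ht
  refine le_of_forall_pos_le_add fun ε hε => ?_
  have hct := hG t ht
  rw [Metric.continuousWithinAt_iff] at hct
  obtain ⟨η, hη, hGη⟩ := hct (ε/2) (by linarith)
  have h1N : Tendsto (fun N : ℕ => 1/(N:ℝ)) atTop (nhds 0) :=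
    tendsto_one_div_atTop_nhds_zero_nat
  have hev : ∀ᶠ N : ℕ in atTop, (1/(N:ℝ) < η ∧ 1 ≤ N) ∧
      ∀ j : ℕ, j ≤ N → G ((j:ℝ)/(N:ℝ)) ≤ ε/2 := by
    filter_upwards [(h1N.eventually (gt_mem_nhds hη)), eventually_ge_atTop 1,
      H (ε/2) (by linarith)] with N h1 h2 h3
    exact ⟨⟨h1, h2⟩, h3⟩
  obtain ⟨N, ⟨⟨hN1, hNpos⟩, hnode⟩⟩ := hev.exists
  have hNR : (0:ℝ) < N := by exact_mod_cast hNpos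
  set j : ℕ := ⌊(N:ℝ) * t⌋₊ with hj
  have hjt : (j:ℝ) ≤ (N:ℝ) * t := Nat.floor_le (mul_nonneg hNR.le ht.1)
  have hjN : j ≤ N := by
    have : ⌊(N:ℝ) * t⌋₊ ≤ ⌊(N:ℝ)⌋₊ := Nat.floor_mono (by nlinarith [ht.2])
    simpa using this
  set s : ℝ := (j:ℝ)/(N:ℝ) with hs
  have hs1 : s ≤ t := by rw [hs, div_le_iff₀ hNR]; linarith
  have hs2 : t - s < 1/(N:ℝ) := by
    have := Nat.lt_floor_add_one ((N:ℝ) * t)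
    have h2 : (N:ℝ) * t < (j:ℝ) + 1 := by exact_mod_cast this
    rw [hs, sub_lt_iff_lt_add,
      show 1/(N:ℝ) + (j:ℝ)/(N:ℝ) = (1 + (j:ℝ))/(N:ℝ) by ring, lt_div_iff₀ hNR]
    nlinarith
  have hsmem : s ∈ Set.Icc (0:ℝ) 1 := by
    constructor
    · positivity
    · rw [hs, div_le_one hNR]; exact_mod_cast hjN
  have hdist : dist s t < η := by
    rw [Real.dist_eq, abs_of_nonpos (by linarith)]
    linarith
  have hG2 := hGη hsmem hdist
  rw [Real.dist_eq] at hG2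
  have := hnode j hjN
  rw [← hs] at this
  have : G t - G s ≤ |G s - G t| := by
    rw [abs_sub_comm]; exact le_abs_self _
  have hnode' := hnode j hjN
  rw [← hs] at hnode'
  linarith [abs_sub_comm (G s) (G t) ▸ le_abs_self (G t - G s)]

lemma riemann_aux (φ : ℝ → ℝ) (hφ : ContinuousOn φ (Set.Icc (0:ℝ) 1)) :
    Tendsto (fun N : ℕ => ((N:ℝ))⁻¹ * ∑ j ∈ Finset.range N, φ ((j:ℝ)/(N:ℝ)))
      atTop (nhds (∫ t in (0:ℝ)..1, φ t)) := by
  rw [Metric.tendsto_nhds]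
  intro ε hε
  have huc := isCompact_Icc.uniformContinuousOn_of_continuous hφ
  rw [Metric.uniformContinuousOn_iff] at huc
  obtain ⟨η, hη, hgη⟩ := huc (ε/2) (by linarith)
  have h1N : Tendsto (fun N : ℕ => 1/(N:ℝ)) atTop (nhds 0) :=
    tendsto_one_div_atTop_nhds_zero_nat
  filter_upwards [eventually_ge_atTop 1, h1N.eventually (gt_mem_nhds hη)] with N hN1 hNη
  have hNR : (0:ℝ) < N := by exact_mod_cast hN1
  set a : ℕ → ℝ := fun j => (j:ℝ)/(N:ℝ) with ha
  have hmem : ∀ k : ℕ, k ≤ N → a k ∈ Set.Icc (0:ℝ) 1 := by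
    intro k hk
    refine ⟨by positivity, ?_⟩
    rw [ha]
    rw [div_le_one hNR]
    exact_mod_cast hk
  have hstep : ∀ k : ℕ, a (k+1) - a k = 1/(N:ℝ) := by
    intro k; rw [ha]; push_cast; field_simp; ring
  have hle : ∀ k : ℕ, a k ≤ a (k+1) := by
    intro k; have := hstep k; have : (0:ℝ) < 1/(N:ℝ) := by positivity
    linarith [hstep k]
  have hint : ∀ k, k < N → IntervalIntegrable φ MeasureTheory.volume (a k) (a (k+1)) := by
    intro k hk
    apply ContinuousOn.intervalIntegrable
    apply hφ.mono
    rw [Set.uIcc_of_le (hle k)]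
    intro x hx
    exact ⟨le_trans (hmem k hk.le).1 hx.1, le_trans hx.2 (hmem (k+1) hk).2⟩
  have hsplit : ∑ k ∈ Finset.range N, ∫ x in a k..a (k+1), φ x = ∫ x in (a 0)..(a N), φ x :=
    intervalIntegral.sum_integral_adjacent_intervals hint
  have ha0 : a 0 = 0 := by simp [ha]
  have haN : a N = 1 := by rw [ha]; field_simp
  have key : (N:ℝ)⁻¹ * (∑ j ∈ Finset.range N, φ ((j:ℝ)/(N:ℝ))) - ∫ t in (0:ℝ)..1, φ t
      = ∑ j ∈ Finset.range N, ∫ t in a j..a (j+1), (φ (a j) - φ t) := by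
    rw [← ha0, ← haN, ← hsplit, Finset.mul_sum, ← Finset.sum_sub_distrib]
    refine Finset.sum_congr rfl fun j hj => ?_
    rw [intervalIntegral.integral_sub intervalIntegrable_const (hint j (Finset.mem_range.1 hj)),
      intervalIntegral.integral_const, smul_eq_mul]
    have hs : a (j+1) - a j = 1/(N:ℝ) := hstep j
    simp only [ha] at hs ⊢
    rw [hs]
    ring
  rw [Real.dist_eq, key]
  have hbound : ∀ j ∈ Finset.range N, |∫ t in a j..a (j+1), (φ (a j) - φ t)| ≤ ε/2 * (1/(N:ℝ)) := by
    intro j hj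
    rw [Finset.mem_range] at hj
    have h1 : ∀ x ∈ Set.uIoc (a j) (a (j+1)), ‖φ (a j) - φ x‖ ≤ ε/2 := by
      intro x hx
      rw [Set.uIoc_of_le (hle j)] at hx
      have hxmem : x ∈ Set.Icc (0:ℝ) 1 :=
        ⟨le_trans (hmem j hj.le).1 hx.1.le, le_trans hx.2 (hmem (j+1) hj).2⟩
      have hd : dist (a j) x < η := by
        rw [Real.dist_eq, abs_of_nonpos (by linarith [hx.1.le])]
        have := hstep j
        linarith [hx.2, hNη]
      have := hgη (a j) (hmem j hj.le) x hxmem hd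
      rw [dist_eq_norm] at this
      linarith
    have := intervalIntegral.norm_integral_le_of_norm_le_const h1
    rw [hstep j, abs_of_nonneg (by positivity : (0:ℝ) ≤ 1/(N:ℝ))] at this
    simpa using this
  calc |∑ j ∈ Finset.range N, ∫ t in a j..a (j+1), (φ (a j) - φ t)|
      ≤ ∑ j ∈ Finset.range N, |∫ t in a j..a (j+1), (φ (a j) - φ t)| :=
        Finset.abs_sum_le_sum_abs _ _
    _ ≤ ∑ _j ∈ Finset.range N, ε/2 * (1/(N:ℝ)) := Finset.sum_le_sum hbound
    _ = ε/2 := by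
        rw [Finset.sum_const, Finset.card_range, nsmul_eq_mul]
        field_simp
    _ < ε := by linarith

lemma riemann (φ : ℝ → ℝ) (hφ : ContinuousOn φ (Set.Icc (0:ℝ) 1)) :
    Tendsto (fun N : ℕ => ((N:ℝ)+1)⁻¹ * ∑ j ∈ Finset.range (N+1), φ ((j:ℝ)/(N:ℝ)))
      atTop (nhds (∫ t in (0:ℝ)..1, φ t)) := by
  have h0 : Tendsto (fun N : ℕ => 1/((N:ℝ)+1)) atTop (nhds 0) :=
    tendsto_one_div_add_atTop_nhds_zero_nat
  have h1 : Tendsto (fun N : ℕ => (N:ℝ)/((N:ℝ)+1)) atTop (nhds 1) := by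
    have heq : (fun N : ℕ => (N:ℝ)/((N:ℝ)+1)) = fun N : ℕ => 1 - 1/((N:ℝ)+1) := by
      funext N
      have : (N:ℝ)+1 ≠ 0 := by positivity
      field_simp
      ring
    rw [heq]
    simpa using tendsto_const_nhds.sub h0
  have hA := riemann_aux φ hφ
  have hg : Tendsto (fun N : ℕ => ((N:ℝ)/((N:ℝ)+1)) *
      ((N:ℝ)⁻¹ * ∑ j ∈ Finset.range N, φ ((j:ℝ)/(N:ℝ))) + φ 1 * (1/((N:ℝ)+1)))
      atTop (nhds (∫ t in (0:ℝ)..1, φ t)) := by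
    have := (h1.mul hA).add ((tendsto_const_nhds (x := φ 1)).mul h0)
    simpa using this
  apply hg.congr'
  filter_upwards [eventually_ge_atTop 1] with N hN1
  have hNR : (0:ℝ) < N := by exact_mod_cast hN1
  have hN1R : (N:ℝ) + 1 ≠ 0 := by positivity
  rw [Finset.sum_range_succ]
  have hdd : ((N:ℕ):ℝ)/(N:ℝ) = 1 := div_self (ne_of_gt hNR)
  rw [hdd]
  field_simp

lemma bern_eq_bernstein (N j : ℕ) (t : ℝ) (ht : t ∈ unitInterval) :
    bern N j t = bernstein N j ⟨t, ht⟩ := by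
  simp [bern, bernstein_apply]

lemma bpoly_sample_eq (N : ℕ) (g : C(I, ℝ)) (t : ℝ) (ht : t ∈ unitInterval) :
    bpoly N (fun j : Fin (N+1) => g (bernstein.z j)) t = bernsteinApproximation N g ⟨t, ht⟩ := by
  rw [bernsteinApproximation.apply]
  unfold bpoly
  refine Finset.sum_congr rfl fun j _ => ?_
  rw [bern_eq_bernstein N j t ht, smul_eq_mul, mul_comm]

lemma euclid_dist_le {n : ℕ} (a b : EuclideanSpace ℝ (Fin n)) {ε : ℝ} (hε : 0 ≤ ε)
    (h : ∀ i, dist (a i) (b i) ≤ ε) : dist a b ≤ n * ε := by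
  rw [EuclideanSpace.dist_eq]
  have h1 : ∑ i, dist (a i) (b i) ^ 2 ≤ (n:ℝ) * ε^2 := by
    calc ∑ i, dist (a i) (b i)^2 ≤ ∑ _i : Fin n, ε^2 := Finset.sum_le_sum (fun i _ => by
          have := h i
          nlinarith [dist_nonneg (x := a i) (y := b i)])
    _ = (n:ℝ) * ε^2 := by rw [Finset.sum_const, Finset.card_fin, nsmul_eq_mul]
  have hle : (n:ℝ) ≤ (n:ℝ)^2 := by
    have := Nat.le_self_pow (two_ne_zero) n
    exact_mod_cast this
  calc Real.sqrt (∑ i, dist (a i) (b i)^2) ≤ Real.sqrt (((n:ℝ)*ε)^2) :=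
        Real.sqrt_le_sqrt (by nlinarith)
    _ = (n:ℝ)*ε := Real.sqrt_sq (by positivity)

lemma bpoly_apply {n : ℕ} (N : ℕ) (c : Fin (N+1) → EuclideanSpace ℝ (Fin n)) (t : ℝ) (i : Fin n) :
    bpoly N c t i = ∑ j : Fin (N+1), bern N (j:ℕ) t * c j i := by
  unfold bpoly
  rw [WithLp.ofLp_sum, Finset.sum_apply]
  rfl

lemma bernstein_uniform {n : ℕ} (x : ℝ → EuclideanSpace ℝ (Fin n))
    (hx : ContinuousOn x (Set.Icc (0:ℝ) 1)) :
    TendstoUniformlyOn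
      (fun N t => bpoly N (fun j : Fin (N+1) => x (((j:ℕ):ℝ)/(N:ℝ))) t) x
      atTop (Set.Icc (0:ℝ) 1) := by
  have hcont : ∀ i : Fin n, Continuous fun s : I => x (↑s) i := by
    intro i
    have h1 : ContinuousOn (fun s => x s i) (Set.Icc (0:ℝ) 1) :=
      (EuclideanSpace.proj i).continuous.comp_continuousOn hx
    exact h1.restrict
  set g : Fin n → C(I, ℝ) := fun i => ⟨fun s => x (↑s) i, hcont i⟩ with hg
  have hco : ∀ (N : ℕ) (t : ℝ) (ht : t ∈ Set.Icc (0:ℝ) 1) (i : Fin n),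
      bpoly N (fun j : Fin (N+1) => x (((j:ℕ):ℝ)/(N:ℝ))) t i
        = bernsteinApproximation N (g i) ⟨t, ht⟩ := by
    intro N t ht i
    rw [bpoly_apply, ← bpoly_sample_eq N (g i) t ht]
    unfold bpoly
    simp only [smul_eq_mul]
    rfl
  rw [Metric.tendstoUniformlyOn_iff]
  intro ε hε
  have hε' : 0 < ε/(2*((n:ℝ)+1)) := by positivity
  have hev : ∀ᶠ N : ℕ in atTop, ∀ i : Fin n,
      dist (bernsteinApproximation N (g i)) (g i) < ε/(2*((n:ℝ)+1)) := by
    rw [Filter.eventually_all]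
    intro i
    have := bernsteinApproximation_uniform (g i)
    rw [Metric.tendsto_nhds] at this
    exact this _ hε'
  filter_upwards [hev] with N hN t ht
  have hdist : dist (x t) (bpoly N (fun j : Fin (N+1) => x (((j:ℕ):ℝ)/(N:ℝ))) t)
      ≤ (n:ℝ) * (ε/(2*((n:ℝ)+1))) := by
    apply euclid_dist_le _ _ hε'.le
    intro i
    rw [hco N t ht i]
    have h1 : dist (x t i) (bernsteinApproximation N (g i) ⟨t, ht⟩)
        = dist (g i ⟨t, ht⟩) (bernsteinApproximation N (g i) ⟨t, ht⟩) := rfl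
    rw [h1, dist_comm]
    exact le_trans (ContinuousMap.dist_apply_le_dist _) (hN i).le
  have : (n:ℝ) * (ε/(2*((n:ℝ)+1))) < ε := by
    have h2 : (0:ℝ) < 2*((n:ℝ)+1) := by positivity
    have he : (n:ℝ) * (ε/(2*((n:ℝ)+1))) = ε * ((n:ℝ)/(2*((n:ℝ)+1))) := by ring
    have hq : (n:ℝ)/(2*((n:ℝ)+1)) < 1 := (div_lt_one h2).2 (by linarith)
    calc (n:ℝ) * (ε/(2*((n:ℝ)+1))) = ε * ((n:ℝ)/(2*((n:ℝ)+1))) := he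
      _ < ε * 1 := by exact mul_lt_mul_of_pos_left hq hε
      _ = ε := mul_one ε
  linarith [hdist]

lemma node_mem (N j : ℕ) (hj : j ≤ N) : (j:ℝ)/(N:ℝ) ∈ Set.Icc (0:ℝ) 1 := by
  constructor
  · positivity
  · rcases Nat.eq_zero_or_pos N with hN|hN
    · subst hN; simp
    · rw [div_le_one (by exact_mod_cast hN)]
      exact_mod_cast hj

lemma cost_tendsto {nx nu : ℕ}
    (Ecost : EuclideanSpace ℝ (Fin nx) × EuclideanSpace ℝ (Fin nx) → ℝ)
    (F : EuclideanSpace ℝ (Fin nx) × EuclideanSpace ℝ (Fin nu) → ℝ)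
    (hEc : Continuous Ecost) {LF : NNReal} (hF : LipschitzWith LF F)
    (p : ℕ → ℝ → EuclideanSpace ℝ (Fin nx)) (q : ℕ → ℝ → EuclideanSpace ℝ (Fin nu))
    (x : ℝ → EuclideanSpace ℝ (Fin nx)) (u : ℝ → EuclideanSpace ℝ (Fin nu))
    (hx : ContinuousOn x (Set.Icc (0:ℝ) 1)) (hu : ContinuousOn u (Set.Icc (0:ℝ) 1))
    (hp : TendstoUniformlyOn p x atTop (Set.Icc (0:ℝ) 1))
    (hq : TendstoUniformlyOn q u atTop (Set.Icc (0:ℝ) 1)) :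
    Tendsto (fun N : ℕ => Ecost (p N 0, p N 1) +
      ((N:ℝ)+1)⁻¹ * ∑ j ∈ Finset.range (N+1), F (p N ((j:ℝ)/(N:ℝ)), q N ((j:ℝ)/(N:ℝ))))
      atTop (nhds (Ecost (x 0, x 1) + ∫ t in (0:ℝ)..1, F (x t, u t))) := by
  have h0m : (0:ℝ) ∈ Set.Icc (0:ℝ) 1 := by norm_num
  have h1m : (1:ℝ) ∈ Set.Icc (0:ℝ) 1 := by norm_num
  have part1 : Tendsto (fun N : ℕ => Ecost (p N 0, p N 1)) atTop (nhds (Ecost (x 0, x 1))) := by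
    have t0 := hp.tendsto_at h0m
    have t1 := hp.tendsto_at h1m
    exact (hEc.tendsto _).comp (t0.prodMk_nhds t1)
  set φ : ℝ → ℝ := fun t => F (x t, u t) with hφdef
  have hφ : ContinuousOn φ (Set.Icc (0:ℝ) 1) :=
    hF.continuous.comp_continuousOn (hx.prodMk hu)
  have part2 := riemann φ hφ
  set RS : ℕ → ℝ := fun N => ((N:ℝ)+1)⁻¹ * ∑ j ∈ Finset.range (N+1), φ ((j:ℝ)/(N:ℝ)) with hRS
  set RSF : ℕ → ℝ := fun N => ((N:ℝ)+1)⁻¹ *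
    ∑ j ∈ Finset.range (N+1), F (p N ((j:ℝ)/(N:ℝ)), q N ((j:ℝ)/(N:ℝ))) with hRSF
  have part3 : Tendsto (fun N => RSF N - RS N) atTop (nhds 0) := by
    rw [Metric.tendsto_nhds]
    intro ε hε
    set ε' : ℝ := ε/(2*((LF:ℝ)+1)) with hε'def
    have hε' : 0 < ε' := by positivity
    rw [Metric.tendstoUniformlyOn_iff] at hp hq
    filter_upwards [hp ε' hε', hq ε' hε'] with N hpN hqN
    have hterm : ∀ j ∈ Finset.range (N+1),
        |F (p N ((j:ℝ)/(N:ℝ)), q N ((j:ℝ)/(N:ℝ))) - φ ((j:ℝ)/(N:ℝ))| ≤ (LF:ℝ) * ε' := by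
      intro j hj
      rw [Finset.mem_range] at hj
      have hmem := node_mem N j (Nat.lt_succ_iff.1 hj)
      have hd := hF.dist_le_mul (p N ((j:ℝ)/(N:ℝ)), q N ((j:ℝ)/(N:ℝ)))
        (x ((j:ℝ)/(N:ℝ)), u ((j:ℝ)/(N:ℝ)))
      rw [Real.dist_eq] at hd
      have hdp : dist (p N ((j:ℝ)/(N:ℝ))) (x ((j:ℝ)/(N:ℝ))) ≤ ε' := by
        rw [dist_comm]; exact (hpN _ hmem).le
      have hdq : dist (q N ((j:ℝ)/(N:ℝ))) (u ((j:ℝ)/(N:ℝ))) ≤ ε' := by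
        rw [dist_comm]; exact (hqN _ hmem).le
      have hprod : dist ((p N ((j:ℝ)/(N:ℝ)), q N ((j:ℝ)/(N:ℝ))))
          ((x ((j:ℝ)/(N:ℝ)), u ((j:ℝ)/(N:ℝ)))) ≤ ε' := by
        rw [Prod.dist_eq]
        exact max_le hdp hdq
      calc |F (p N ((j:ℝ)/(N:ℝ)), q N ((j:ℝ)/(N:ℝ))) - φ ((j:ℝ)/(N:ℝ))|
          ≤ (LF:ℝ) * dist ((p N ((j:ℝ)/(N:ℝ)), q N ((j:ℝ)/(N:ℝ))))
            ((x ((j:ℝ)/(N:ℝ)), u ((j:ℝ)/(N:ℝ)))) := hd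
        _ ≤ (LF:ℝ) * ε' := by
            apply mul_le_mul_of_nonneg_left hprod LF.2
    have hNpos : (0:ℝ) < (N:ℝ)+1 := by positivity
    have key : RSF N - RS N = ((N:ℝ)+1)⁻¹ *
        ∑ j ∈ Finset.range (N+1),
          (F (p N ((j:ℝ)/(N:ℝ)), q N ((j:ℝ)/(N:ℝ))) - φ ((j:ℝ)/(N:ℝ))) := by
      rw [hRSF, hRS, Finset.sum_sub_distrib]
      ring
    rw [Real.dist_eq, sub_zero, key, abs_mul, abs_of_nonneg (by positivity : (0:ℝ) ≤ ((N:ℝ)+1)⁻¹)]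
    have habs : |∑ j ∈ Finset.range (N+1),
        (F (p N ((j:ℝ)/(N:ℝ)), q N ((j:ℝ)/(N:ℝ))) - φ ((j:ℝ)/(N:ℝ)))|
        ≤ ((N:ℝ)+1) * ((LF:ℝ) * ε') := by
      calc |∑ j ∈ Finset.range (N+1),
          (F (p N ((j:ℝ)/(N:ℝ)), q N ((j:ℝ)/(N:ℝ))) - φ ((j:ℝ)/(N:ℝ)))|
          ≤ ∑ j ∈ Finset.range (N+1),
            |F (p N ((j:ℝ)/(N:ℝ)), q N ((j:ℝ)/(N:ℝ))) - φ ((j:ℝ)/(N:ℝ))| :=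
          Finset.abs_sum_le_sum_abs _ _
        _ ≤ ∑ _j ∈ Finset.range (N+1), (LF:ℝ) * ε' := Finset.sum_le_sum hterm
        _ = ((N:ℝ)+1) * ((LF:ℝ) * ε') := by
            rw [Finset.sum_const, Finset.card_range, nsmul_eq_mul]
            push_cast
            ring
    have hfin : ((N:ℝ)+1)⁻¹ * (((N:ℝ)+1) * ((LF:ℝ) * ε')) = (LF:ℝ) * ε' := by
      field_simp
    have hLFε : (LF:ℝ) * ε' < ε := by
      rw [hε'def]
      have hLF0 : (0:ℝ) ≤ LF := LF.2
      have h2 : (0:ℝ) < 2*((LF:ℝ)+1) := by positivity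
      have : (LF:ℝ) * (ε/(2*((LF:ℝ)+1))) = ε * ((LF:ℝ)/(2*((LF:ℝ)+1))) := by ring
      rw [this]
      have hq1 : (LF:ℝ)/(2*((LF:ℝ)+1)) < 1 := (div_lt_one h2).2 (by linarith)
      calc ε * ((LF:ℝ)/(2*((LF:ℝ)+1))) < ε * 1 := mul_lt_mul_of_pos_left hq1 hε
        _ = ε := mul_one ε
    calc ((N:ℝ)+1)⁻¹ * |∑ j ∈ Finset.range (N+1),
          (F (p N ((j:ℝ)/(N:ℝ)), q N ((j:ℝ)/(N:ℝ))) - φ ((j:ℝ)/(N:ℝ)))|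
        ≤ ((N:ℝ)+1)⁻¹ * (((N:ℝ)+1) * ((LF:ℝ) * ε')) :=
          mul_le_mul_of_nonneg_left habs (by positivity)
      _ = (LF:ℝ) * ε' := hfin
      _ < ε := hLFε
  have hsum : Tendsto RSF atTop (nhds (∫ t in (0:ℝ)..1, φ t)) := by
    have := part2.add part3
    rw [add_zero] at this
    apply this.congr
    intro N
    simp only [hRS]
    ring
  have := part1.add hsum
  exact this

lemma euclid_apply_dist_le {n : ℕ} (a b : EuclideanSpace ℝ (Fin n)) (i : Fin n) :
    dist (a i) (b i) ≤ dist a b := by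
  rw [EuclideanSpace.dist_eq]
  have h1 : dist (a i) (b i) = Real.sqrt (dist (a i) (b i)^2) := (Real.sqrt_sq dist_nonneg).symm
  rw [h1]
  apply Real.sqrt_le_sqrt
  exact Finset.single_le_sum (f := fun j => dist (a j) (b j)^2) (fun j _ => sq_nonneg _) (Finset.mem_univ i)

variable {nx nu ne nh : ℕ}

/-- Feasibility for Problem `P`: `x` is continuously differentiable with derivative `x'`,
`u` is continuous, and the dynamics, boundary and inequality constraints hold. -/
def PFeasible
    (f : EuclideanSpace ℝ (Fin nx) × EuclideanSpace ℝ (Fin nu) → EuclideanSpace ℝ (Fin nx))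
    (e : EuclideanSpace ℝ (Fin nx) × EuclideanSpace ℝ (Fin nx) → EuclideanSpace ℝ (Fin ne))
    (h : EuclideanSpace ℝ (Fin nx) × EuclideanSpace ℝ (Fin nu) → EuclideanSpace ℝ (Fin nh))
    (x x' : ℝ → EuclideanSpace ℝ (Fin nx)) (u : ℝ → EuclideanSpace ℝ (Fin nu)) : Prop :=
  (∀ t ∈ Set.Icc (0:ℝ) 1, HasDerivWithinAt x (x' t) (Set.Icc (0:ℝ) 1) t) ∧
  ContinuousOn x' (Set.Icc (0:ℝ) 1) ∧ ContinuousOn u (Set.Icc (0:ℝ) 1) ∧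
  (∀ t ∈ Set.Icc (0:ℝ) 1, x' t = f (x t, u t)) ∧
  e (x 0, x 1) = 0 ∧
  (∀ t ∈ Set.Icc (0:ℝ) 1, ∀ i, h (x t, u t) i ≤ 0)

/-- The cost of Problem `P`. -/
noncomputable def PCost
    (Ecost : EuclideanSpace ℝ (Fin nx) × EuclideanSpace ℝ (Fin nx) → ℝ)
    (F : EuclideanSpace ℝ (Fin nx) × EuclideanSpace ℝ (Fin nu) → ℝ)
    (x : ℝ → EuclideanSpace ℝ (Fin nx)) (u : ℝ → EuclideanSpace ℝ (Fin nu)) : ℝ :=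
  Ecost (x 0, x 1) + ∫ t in (0:ℝ)..1, F (x t, u t)

/-- Feasibility for the discretized Problem `P_N` with relaxation bound `δ`:
the Bernstein polynomials with coefficients `c`, `d` satisfy the relaxed dynamics
and inequality constraints at all nodes `j/N` and the exact boundary condition. -/
def DiscFeasible
    (f : EuclideanSpace ℝ (Fin nx) × EuclideanSpace ℝ (Fin nu) → EuclideanSpace ℝ (Fin nx))
    (e : EuclideanSpace ℝ (Fin nx) × EuclideanSpace ℝ (Fin nx) → EuclideanSpace ℝ (Fin ne))
    (h : EuclideanSpace ℝ (Fin nx) × EuclideanSpace ℝ (Fin nu) → EuclideanSpace ℝ (Fin nh))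
    (δ : ℝ) (N : ℕ) (c : Fin (N + 1) → EuclideanSpace ℝ (Fin nx))
    (d : Fin (N + 1) → EuclideanSpace ℝ (Fin nu)) : Prop :=
  (∀ j : ℕ, j ≤ N →
    ‖deriv (bpoly N c) ((j : ℝ) / (N : ℝ))
        - f (bpoly N c ((j : ℝ) / (N : ℝ)), bpoly N d ((j : ℝ) / (N : ℝ)))‖ ≤ δ) ∧
  e (bpoly N c 0, bpoly N c 1) = 0 ∧
  (∀ j : ℕ, j ≤ N → ∀ i,
    h (bpoly N c ((j : ℝ) / (N : ℝ)), bpoly N d ((j : ℝ) / (N : ℝ))) i ≤ δ)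

/-- The discretized cost of Problem `P_N`. -/
noncomputable def DiscCost
    (Ecost : EuclideanSpace ℝ (Fin nx) × EuclideanSpace ℝ (Fin nx) → ℝ)
    (F : EuclideanSpace ℝ (Fin nx) × EuclideanSpace ℝ (Fin nu) → ℝ)
    (N : ℕ) (c : Fin (N + 1) → EuclideanSpace ℝ (Fin nx))
    (d : Fin (N + 1) → EuclideanSpace ℝ (Fin nu)) : ℝ :=
  Ecost (bpoly N c 0, bpoly N c 1) +
    ((N : ℝ) + 1)⁻¹ *
      ∑ j ∈ Finset.range (N + 1),
        F (bpoly N c ((j : ℝ) / (N : ℝ)), bpoly N d ((j : ℝ) / (N : ℝ)))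

/-- Theorem 2, Consistency: if the optimal Bernstein polynomials of
Problem `P_N` (with relaxation bound `δ_P^N = C_P·max{W_{x*'}, W_{x*}, W_{u*}}(N^{-1/2})`,
`C_P` as in the feasibility theorem) converge uniformly, together with their
derivatives, to a pair `(x^∞, u^∞)` with continuous derivative and control, then
`(x^∞, u^∞)` is feasible for Problem `P` and achieves the optimal cost of Problem `P`. -/
theorem bernstein_discretization_consistency
    (nx nu ne nh : ℕ)
    (Ecost : EuclideanSpace ℝ (Fin nx) × EuclideanSpace ℝ (Fin nx) → ℝ)
    (F : EuclideanSpace ℝ (Fin nx) × EuclideanSpace ℝ (Fin nu) → ℝ)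
    (f : EuclideanSpace ℝ (Fin nx) × EuclideanSpace ℝ (Fin nu) → EuclideanSpace ℝ (Fin nx))
    (e : EuclideanSpace ℝ (Fin nx) × EuclideanSpace ℝ (Fin nx) → EuclideanSpace ℝ (Fin ne))
    (h : EuclideanSpace ℝ (Fin nx) × EuclideanSpace ℝ (Fin nu) → EuclideanSpace ℝ (Fin nh))
    (LE LF Lf Le Lh : NNReal)
    (hE : LipschitzWith LE Ecost) (hF : LipschitzWith LF F) (hf : LipschitzWith Lf f)
    (he : LipschitzWith Le e) (hh : LipschitzWith Lh h)
    -- the optimal solution of Problem P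
    (xs xs' : ℝ → EuclideanSpace ℝ (Fin nx)) (us : ℝ → EuclideanSpace ℝ (Fin nu))
    (hfeas : PFeasible f e h xs xs' us)
    (hopt : ∀ (x x' : ℝ → EuclideanSpace ℝ (Fin nx)) (u : ℝ → EuclideanSpace ℝ (Fin nu)),
      PFeasible f e h x x' u → PCost Ecost F xs us ≤ PCost Ecost F x u)
    -- the relaxation bound δ_P^N, with C_P as in the feasibility theorem
    (CP : ℝ) (hCP : 0 < CP)
    (δ : ℕ → ℝ)
    (hδ : ∀ N : ℕ, δ N = CP * max (modCont xs' ((N : ℝ) ^ (-(1/2 : ℝ))))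
        (max (modCont xs ((N : ℝ) ^ (-(1/2 : ℝ)))) (modCont us ((N : ℝ) ^ (-(1/2 : ℝ))))))
    (N₁ : ℕ)
    (hBfeas : ∀ N : ℕ, N₁ ≤ N → DiscFeasible f e h (δ N) N
        (fun j : Fin (N + 1) => xs (((j : ℕ) : ℝ) / (N : ℝ)))
        (fun j : Fin (N + 1) => us (((j : ℕ) : ℝ) / (N : ℝ))))
    -- the optimal solutions of the discretized problems P_N
    (cN : (N : ℕ) → Fin (N + 1) → EuclideanSpace ℝ (Fin nx))
    (dN : (N : ℕ) → Fin (N + 1) → EuclideanSpace ℝ (Fin nu))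
    (hNfeas : ∀ N : ℕ, N₁ ≤ N → DiscFeasible f e h (δ N) N (cN N) (dN N))
    (hNopt : ∀ N : ℕ, N₁ ≤ N → ∀ c d, DiscFeasible f e h (δ N) N c d →
      DiscCost Ecost F N (cN N) (dN N) ≤ DiscCost Ecost F N c d)
    -- the uniform accumulation point
    (xinf vinf : ℝ → EuclideanSpace ℝ (Fin nx)) (uinf : ℝ → EuclideanSpace ℝ (Fin nu))
    (hconvx : TendstoUniformlyOn (fun N => bpoly N (cN N)) xinf
      Filter.atTop (Set.Icc (0:ℝ) 1))
    (hconvx' : TendstoUniformlyOn (fun N => deriv (bpoly N (cN N))) vinf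
      Filter.atTop (Set.Icc (0:ℝ) 1))
    (hconvu : TendstoUniformlyOn (fun N => bpoly N (dN N)) uinf
      Filter.atTop (Set.Icc (0:ℝ) 1))
    (hxinfd : ∀ t ∈ Set.Icc (0:ℝ) 1, HasDerivWithinAt xinf (vinf t) (Set.Icc (0:ℝ) 1) t)
    (hvinf : ContinuousOn vinf (Set.Icc (0:ℝ) 1))
    (huinf : ContinuousOn uinf (Set.Icc (0:ℝ) 1)) :
    PFeasible f e h xinf vinf uinf ∧
      PCost Ecost F xinf uinf = PCost Ecost F xs us := by
  obtain ⟨hxs_deriv, hxs'c, husc, hxs_dyn, hxs_e, hxs_h⟩ := hfeas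
  have hxs_cont : ContinuousOn xs (Set.Icc (0:ℝ) 1) :=
    fun t ht => (hxs_deriv t ht).continuousWithinAt
  have hxinf_cont : ContinuousOn xinf (Set.Icc (0:ℝ) 1) :=
    fun t ht => (hxinfd t ht).continuousWithinAt
  have h0m : (0:ℝ) ∈ Set.Icc (0:ℝ) 1 := by norm_num
  have h1m : (1:ℝ) ∈ Set.Icc (0:ℝ) 1 := by norm_num
  -- δ tends to 0
  have hrpos : ∀ N : ℕ, 0 ≤ ((N:ℝ))^(-(1/2:ℝ)) :=
    fun N => Real.rpow_nonneg (Nat.cast_nonneg N) _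
  have hrt : Filter.Tendsto (fun N : ℕ => ((N:ℝ))^(-(1/2:ℝ))) atTop (nhds 0) :=
    (tendsto_rpow_neg_atTop (by norm_num)).comp tendsto_natCast_atTop_atTop
  have hδ0 : Filter.Tendsto δ atTop (nhds 0) := by
    have h1 := tendsto_modCont xs' hxs'c hrpos hrt
    have h2 := tendsto_modCont xs hxs_cont hrpos hrt
    have h3 := tendsto_modCont us husc hrpos hrt
    have h4 := Filter.Tendsto.const_mul CP (h1.max (h2.max h3))
    rw [show max (0:ℝ) (max 0 0) = 0 by norm_num, mul_zero] at h4
    exact h4.congr (fun N => (hδ N).symm)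
  have hδsmall : ∀ ε > (0:ℝ), ∀ᶠ N : ℕ in atTop, δ N ≤ ε := by
    intro ε hε
    rw [Metric.tendsto_nhds] at hδ0
    filter_upwards [hδ0 ε hε] with N hN
    rw [Real.dist_eq, sub_zero] at hN
    exact (le_abs_self _).trans hN.le
  -- dynamics constraint for the limit
  have hdyn : ∀ t ∈ Set.Icc (0:ℝ) 1, vinf t = f (xinf t, uinf t) := by
    have hGc : ContinuousOn (fun t => ‖vinf t - f (xinf t, uinf t)‖) (Set.Icc (0:ℝ) 1) :=
      (hvinf.sub (hf.continuous.comp_continuousOn (hxinf_cont.prodMk huinf))).norm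
    have hnodes : ∀ ε > (0:ℝ), ∀ᶠ N : ℕ in atTop, ∀ j : ℕ, j ≤ N →
        ‖vinf ((j:ℝ)/(N:ℝ)) - f (xinf ((j:ℝ)/(N:ℝ)), uinf ((j:ℝ)/(N:ℝ)))‖ ≤ ε := by
      intro ε hε
      set ε4' : ℝ := ε/(4*((Lf:ℝ)+1)) with hε4'def
      have hε4' : 0 < ε4' := by positivity
      rw [Metric.tendstoUniformlyOn_iff] at hconvx hconvu hconvx'
      filter_upwards [eventually_ge_atTop N₁, hδsmall (ε/4) (by linarith),
        hconvx' (ε/4) (by linarith), hconvx ε4' hε4', hconvu ε4' hε4'] with N hN1 hNδ hNd hNx hNu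
      intro j hj
      set s : ℝ := (j:ℝ)/(N:ℝ)
      have hmem := node_mem N j hj
      have hc1 := (hNfeas N hN1).1 j hj
      have hd1 : ‖vinf s - deriv (bpoly N (cN N)) s‖ ≤ ε/4 := by
        have := hNd s hmem
        rw [dist_eq_norm] at this
        exact this.le
      have hd3 : ‖f (bpoly N (cN N) s, bpoly N (dN N) s) - f (xinf s, uinf s)‖ ≤ ε/4 := by
        have hdd := hf.dist_le_mul (bpoly N (cN N) s, bpoly N (dN N) s) (xinf s, uinf s)
        rw [dist_eq_norm] at hdd
        have hx1 : dist (bpoly N (cN N) s) (xinf s) ≤ ε4' := by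
          rw [dist_comm]; exact (hNx s hmem).le
        have hu1 : dist (bpoly N (dN N) s) (uinf s) ≤ ε4' := by
          rw [dist_comm]; exact (hNu s hmem).le
        have hprod : dist (bpoly N (cN N) s, bpoly N (dN N) s) (xinf s, uinf s) ≤ ε4' := by
          rw [Prod.dist_eq]; exact max_le hx1 hu1
        have hL : (Lf:ℝ) * ε4' ≤ ε/4 := by
          have hq1 : (Lf:ℝ)/(4*((Lf:ℝ)+1)) ≤ 1/4 := by
            rw [div_le_div_iff₀ (by positivity) (by norm_num : (0:ℝ) < 4)]
            nlinarith [Lf.2]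
          calc (Lf:ℝ) * ε4' = ε * ((Lf:ℝ)/(4*((Lf:ℝ)+1))) := by rw [hε4'def]; ring
            _ ≤ ε * (1/4) := mul_le_mul_of_nonneg_left hq1 hε.le
            _ = ε/4 := by ring
        calc ‖f (bpoly N (cN N) s, bpoly N (dN N) s) - f (xinf s, uinf s)‖
            ≤ (Lf:ℝ) * dist (bpoly N (cN N) s, bpoly N (dN N) s) (xinf s, uinf s) := hdd
          _ ≤ (Lf:ℝ) * ε4' := mul_le_mul_of_nonneg_left hprod Lf.2
          _ ≤ ε/4 := hL
      calc ‖vinf s - f (xinf s, uinf s)‖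
          ≤ ‖vinf s - deriv (bpoly N (cN N)) s‖ +
            ‖deriv (bpoly N (cN N)) s - f (bpoly N (cN N) s, bpoly N (dN N) s)‖ +
            ‖f (bpoly N (cN N) s, bpoly N (dN N) s) - f (xinf s, uinf s)‖ := by
              have := norm_sub_le_norm_sub_add_norm_sub (vinf s)
                (deriv (bpoly N (cN N)) s) (f (xinf s, uinf s))
              calc ‖vinf s - f (xinf s, uinf s)‖ ≤ ‖vinf s - deriv (bpoly N (cN N)) s‖ +
                  ‖deriv (bpoly N (cN N)) s - f (xinf s, uinf s)‖ :=
                    norm_sub_le_norm_sub_add_norm_sub _ _ _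
                _ ≤ _ := by
                    have := norm_sub_le_norm_sub_add_norm_sub (deriv (bpoly N (cN N)) s)
                      (f (bpoly N (cN N) s, bpoly N (dN N) s)) (f (xinf s, uinf s))
                    linarith
        _ ≤ ε/4 + δ N + ε/4 := by
            have := hc1
            linarith [hd1, hd3]
        _ ≤ ε := by linarith [hNδ]
    intro t ht
    have := le_of_nodewise _ hGc hnodes t ht
    have hz : ‖vinf t - f (xinf t, uinf t)‖ = 0 := le_antisymm this (norm_nonneg _)
    rw [norm_eq_zero, sub_eq_zero] at hz
    exact hz
  -- boundary constraint
  have hbnd : e (xinf 0, xinf 1) = 0 := by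
    have hb : Filter.Tendsto (fun N => e (bpoly N (cN N) 0, bpoly N (cN N) 1)) atTop
        (nhds (e (xinf 0, xinf 1))) :=
      (he.continuous.tendsto _).comp
        ((hconvx.tendsto_at h0m).prodMk_nhds (hconvx.tendsto_at h1m))
    have hb0 : ∀ᶠ N : ℕ in atTop,
        e (bpoly N (cN N) 0, bpoly N (cN N) 1) = (0 : EuclideanSpace ℝ (Fin ne)) := by
      filter_upwards [eventually_ge_atTop N₁] with N hN
      exact (hNfeas N hN).2.1
    have := hb.congr' (hb0.mono fun N hN => hN)
    exact (tendsto_nhds_unique this tendsto_const_nhds)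
  -- inequality constraints
  have hineq : ∀ t ∈ Set.Icc (0:ℝ) 1, ∀ i, h (xinf t, uinf t) i ≤ 0 := by
    have main : ∀ i, ∀ t ∈ Set.Icc (0:ℝ) 1, h (xinf t, uinf t) i ≤ 0 := by
      intro i
      apply le_of_nodewise
      · exact ((EuclideanSpace.proj i).continuous.comp hh.continuous).comp_continuousOn
          (hxinf_cont.prodMk huinf)
      · intro ε hε
        set ε2' : ℝ := ε/(2*((Lh:ℝ)+1)) with hε2'def
        have hε2' : 0 < ε2' := by positivity
        rw [Metric.tendstoUniformlyOn_iff] at hconvx hconvu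
        filter_upwards [eventually_ge_atTop N₁, hδsmall (ε/2) (by linarith),
          hconvx ε2' hε2', hconvu ε2' hε2'] with N hN1 hNδ hNx hNu
        intro j hj
        set s : ℝ := (j:ℝ)/(N:ℝ)
        have hmem := node_mem N j hj
        have hc1 := (hNfeas N hN1).2.2 j hj i
        have hdiff : |h (xinf s, uinf s) i - h (bpoly N (cN N) s, bpoly N (dN N) s) i|
            ≤ (Lh:ℝ) * ε2' := by
          have h1 : dist (h (xinf s, uinf s) i) (h (bpoly N (cN N) s, bpoly N (dN N) s) i)
              ≤ dist (h (xinf s, uinf s)) (h (bpoly N (cN N) s, bpoly N (dN N) s)) :=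
            euclid_apply_dist_le _ _ i
          have h2 := hh.dist_le_mul (xinf s, uinf s) (bpoly N (cN N) s, bpoly N (dN N) s)
          have hprod : dist ((xinf s, uinf s)) ((bpoly N (cN N) s, bpoly N (dN N) s)) ≤ ε2' := by
            rw [Prod.dist_eq]
            exact max_le (hNx s hmem).le (hNu s hmem).le
          rw [Real.dist_eq] at h1
          calc |h (xinf s, uinf s) i - h (bpoly N (cN N) s, bpoly N (dN N) s) i|
              ≤ dist (h (xinf s, uinf s)) (h (bpoly N (cN N) s, bpoly N (dN N) s)) := h1
            _ ≤ (Lh:ℝ) * dist ((xinf s, uinf s)) ((bpoly N (cN N) s, bpoly N (dN N) s)) := h2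
            _ ≤ (Lh:ℝ) * ε2' := mul_le_mul_of_nonneg_left hprod Lh.2
        have hL : (Lh:ℝ) * ε2' ≤ ε/2 := by
          have hq1 : (Lh:ℝ)/(2*((Lh:ℝ)+1)) ≤ 1/2 := by
            rw [div_le_div_iff₀ (by positivity) (by norm_num : (0:ℝ) < 2)]
            nlinarith [Lh.2]
          calc (Lh:ℝ) * ε2' = ε * ((Lh:ℝ)/(2*((Lh:ℝ)+1))) := by rw [hε2'def]; ring
            _ ≤ ε * (1/2) := mul_le_mul_of_nonneg_left hq1 hε.le
            _ = ε/2 := by ring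
        have := abs_sub_le_iff.1 hdiff
        linarith [this.1, hc1, hNδ]
    intro t ht i
    exact main i t ht
  have hfeasinf : PFeasible f e h xinf vinf uinf :=
    ⟨hxinfd, hvinf, huinf, hdyn, hbnd, hineq⟩
  -- cost convergence
  have hcostA : Filter.Tendsto (fun N => DiscCost Ecost F N (cN N) (dN N)) atTop
      (nhds (PCost Ecost F xinf uinf)) := by
    exact cost_tendsto Ecost F hE.continuous hF (fun N => bpoly N (cN N))
      (fun N => bpoly N (dN N)) xinf uinf hxinf_cont huinf hconvx hconvu
  have hcostB : Filter.Tendsto (fun N => DiscCost Ecost F N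
      (fun j : Fin (N + 1) => xs (((j : ℕ) : ℝ) / (N : ℝ)))
      (fun j : Fin (N + 1) => us (((j : ℕ) : ℝ) / (N : ℝ)))) atTop
      (nhds (PCost Ecost F xs us)) := by
    exact cost_tendsto Ecost F hE.continuous hF
      (fun N => bpoly N (fun j : Fin (N + 1) => xs (((j : ℕ) : ℝ) / (N : ℝ))))
      (fun N => bpoly N (fun j : Fin (N + 1) => us (((j : ℕ) : ℝ) / (N : ℝ))))
      xs us hxs_cont husc (bernstein_uniform xs hxs_cont) (bernstein_uniform us husc)
  have hle : PCost Ecost F xinf uinf ≤ PCost Ecost F xs us := by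
    apply le_of_tendsto_of_tendsto hcostA hcostB
    filter_upwards [eventually_ge_atTop N₁] with N hN
    exact hNopt N hN _ _ (hBfeas N hN)
  exact ⟨hfeasinf, le_antisymm hle (hopt xinf vinf uinf hfeasinf)⟩
end
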